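/- For a partition λ with at most ℓ parts, the two Jacobi–Trudi determinants agree: det(h_{λ_i + j - i})_{1≤i,j≤ℓ(λ)} = det(e_{λ'_i + j - i})_{1≤i,j≤ℓ(λ')}, where λ' is the conjugate partition and h, e are the complete homogeneous and elementary symmetric polynomials in infinitely many (or sufficiently many) variables. -/

import Mathlib

open MvPolynomial Finset

/-- Integer-indexed complete homogeneous symmetric polynomial in `N` variables
(`0` for negative index, `h_0 = 1`). -/
noncomputable def hZ (N : ℕ) (m : ℤ) : MvPolynomial (Fin N) ℤ :=
  if 0 ≤ m then MvPolynomial.hsymm (Fin N) ℤ m.toNat else 0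

/-- Integer-indexed elementary symmetric polynomial in `N` variables
(`0` for negative index, `e_0 = 1`, and `e_m = 0` for `m > N`). -/
noncomputable def eZ (N : ℕ) (m : ℤ) : MvPolynomial (Fin N) ℤ :=
  if 0 ≤ m then MvPolynomial.esymm (Fin N) ℤ m.toNat else 0

section EH
variable {σ : Type*} [Fintype σ] [DecidableEq σ] {R : Type*} [CommRing R]

/-- homogeneous complete symmetric series restricted to a finset of variables -/
noncomputable def JTHser (R : Type*) [CommRing R] (s : Finset σ) :
    PowerSeries (MvPolynomial σ R) :=
  PowerSeries.mk fun n => ∑ μ ∈ s.sym n, (μ.1.map MvPolynomial.X).prod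

omit [Fintype σ] in
lemma coeff_JTHser (s : Finset σ) (n : ℕ) :
    PowerSeries.coeff n (JTHser R s) = ∑ μ ∈ s.sym n, (μ.1.map MvPolynomial.X).prod :=
  PowerSeries.coeff_mk _ _

lemma JTHser_empty : JTHser R (∅ : Finset σ) = 1 := by
  apply PowerSeries.ext
  intro n
  rw [coeff_JTHser, PowerSeries.coeff_one]
  cases n with
  | zero =>
    rw [if_pos rfl, Finset.sym_zero, Finset.sum_singleton]
    rfl
  | succ n => simp [Finset.sym_empty]

omit [Fintype σ] in
lemma JT_sym_split {M : Type*} [AddCommMonoid M] (a : σ) (s : Finset σ) (ha : a ∉ s) (n : ℕ)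
    (f : Sym σ (n+1) → M) :
    ∑ μ ∈ (insert a s).sym (n+1), f μ
      = ∑ ν ∈ (insert a s).sym n, f (a ::ₛ ν) + ∑ μ ∈ s.sym (n+1), f μ := by
  rw [← Finset.sum_filter_add_sum_filter_not ((insert a s).sym (n+1)) (fun μ => a ∈ μ)]
  congr 1
  · have himg : Finset.filter (fun μ => a ∈ μ) ((insert a s).sym (n+1))
        = ((insert a s).sym n).image (Sym.cons a) := by
      ext μ
      simp only [mem_filter, mem_image, Finset.mem_sym_iff]
      constructor
      · rintro ⟨hmem, haμ⟩
        refine ⟨μ.erase a haμ, fun b hb => ?_, Sym.cons_erase haμ⟩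
        apply hmem
        have : b ∈ a ::ₛ μ.erase a haμ := Sym.mem_cons_of_mem hb
        rwa [Sym.cons_erase] at this
      · rintro ⟨ν, hν, rfl⟩
        refine ⟨fun b hb => ?_, Sym.mem_cons_self _ _⟩
        rcases Sym.mem_cons.1 hb with rfl | hb
        · exact mem_insert_self _ _
        · exact hν b hb
    rw [himg, Finset.sum_image]
    intro x _ y _ h
    exact (Sym.cons_inj_right a x y).1 h
  · congr 1
    ext μ
    simp only [mem_filter, Finset.mem_sym_iff]
    constructor
    · rintro ⟨hmem, haμ⟩ b hb
      rcases mem_insert.1 (hmem b hb) with rfl | hbs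
      · exact absurd hb haμ
      · exact hbs
    · intro hmem
      exact ⟨fun b hb => mem_insert_of_mem (hmem b hb), fun haμ => ha (hmem a haμ)⟩

lemma JTHser_rec (a : σ) (s : Finset σ) (ha : a ∉ s) :
    (1 - PowerSeries.C (MvPolynomial.X a : MvPolynomial σ R) * PowerSeries.X)
      * JTHser R (insert a s) = JTHser R s := by
  apply PowerSeries.ext
  intro n
  rw [sub_mul, one_mul, map_sub, mul_assoc, PowerSeries.coeff_C_mul, coeff_JTHser]
  cases n with
  | zero =>
    rw [PowerSeries.coeff_zero_X_mul, mul_zero, sub_zero, coeff_JTHser,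
      Finset.sym_zero, Finset.sym_zero]
  | succ n =>
    rw [PowerSeries.coeff_succ_X_mul, coeff_JTHser, coeff_JTHser]
    rw [JT_sym_split a s ha n, Finset.mul_sum]
    have hc : ∀ ν : Sym σ n, ((a ::ₛ ν).1.map MvPolynomial.X).prod
        = MvPolynomial.X a * (ν.1.map (MvPolynomial.X : σ → MvPolynomial σ R)).prod := by
      intro ν
      rw [Sym.cons, Multiset.map_cons, Multiset.prod_cons]
    simp only [hc]
    ring

lemma JT_prodE_mul_Hser (s : Finset σ) :
    (∏ i ∈ s, (1 - PowerSeries.C (MvPolynomial.X i : MvPolynomial σ R) * PowerSeries.X))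
      * JTHser R s = 1 := by
  induction s using Finset.induction_on with
  | empty => rw [JTHser_empty]; simp
  | @insert a s ha ih =>
    rw [Finset.prod_insert ha, mul_comm (1 - _) (∏ _ ∈ _, _), mul_assoc, JTHser_rec a s ha, ih]

lemma JT_coeff_prodE (s : Finset σ) (t : ℕ) :
    PowerSeries.coeff t
        (∏ i ∈ s, (1 - PowerSeries.C (MvPolynomial.X i : MvPolynomial σ R) * PowerSeries.X))
      = (-1)^t * ∑ A ∈ s.powersetCard t, ∏ i ∈ A, (MvPolynomial.X i : MvPolynomial σ R) := by
  induction s using Finset.induction_on generalizing t with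
  | empty =>
    rw [Finset.prod_empty, PowerSeries.coeff_one]
    cases t with
    | zero => simp
    | succ t =>
      rw [if_neg (by omega), Finset.powersetCard_eq_empty.mpr (by simp), Finset.sum_empty,
        mul_zero]
  | @insert a s ha ih =>
    rw [Finset.prod_insert ha, sub_mul, one_mul, map_sub, mul_assoc, PowerSeries.coeff_C_mul]
    cases t with
    | zero =>
      rw [PowerSeries.coeff_zero_X_mul, mul_zero, sub_zero, ih 0]
      simp
    | succ t =>
      have hins : ∀ A ∈ Finset.powersetCard t s,
          ∏ i ∈ insert a A, (MvPolynomial.X i : MvPolynomial σ R)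
            = MvPolynomial.X a * ∏ i ∈ A, MvPolynomial.X i := by
        intro A hA
        exact Finset.prod_insert fun hax => ha ((Finset.mem_powersetCard.1 hA).1 hax)
      rw [PowerSeries.coeff_succ_X_mul, ih (t+1), ih t,
        Finset.powersetCard_succ_insert ha]
      have hdisj : Disjoint (Finset.powersetCard (t+1) s)
          ((Finset.powersetCard t s).image (insert a)) := by
        rw [Finset.disjoint_left]
        intro B hB hB'
        rcases Finset.mem_image.1 hB' with ⟨A, _, rfl⟩
        exact ha ((Finset.mem_powersetCard.1 hB).1 (Finset.mem_insert_self a A))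
      rw [Finset.sum_union hdisj, Finset.sum_image ?hinj, Finset.sum_congr rfl hins,
        ← Finset.mul_sum]
      case hinj =>
        intro x hx y hy h
        have hxa : a ∉ x := fun hax => ha ((Finset.mem_powersetCard.1 hx).1 hax)
        have hya : a ∉ y := fun hay => ha ((Finset.mem_powersetCard.1 hy).1 hay)
        rw [← Finset.erase_insert hxa, h, Finset.erase_insert hya]
      ring

lemma JT_eh (d : ℕ) (hd : d ≠ 0) :
    ∑ t ∈ range (d+1), (-1)^t * (esymm σ R t * hsymm σ R (d - t)) = 0 := by
  have h0 := congrArg (PowerSeries.coeff d) (JT_prodE_mul_Hser (R := R) (univ : Finset σ))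
  rw [PowerSeries.coeff_mul, PowerSeries.coeff_one, if_neg hd,
    Finset.Nat.sum_antidiagonal_eq_sum_range_succ_mk] at h0
  rw [← h0]
  apply Finset.sum_congr rfl
  intro t _
  rw [JT_coeff_prodE, coeff_JTHser, Finset.sym_univ]
  rw [esymm, hsymm]
  ring

end EH

section Mat
variable (N : ℕ)

lemma hZ_coe (k : ℕ) : hZ N (k : ℤ) = hsymm (Fin N) ℤ k := by
  rw [hZ, if_pos (Int.ofNat_nonneg k), Int.toNat_natCast]

lemma hZ_neg {z : ℤ} (h : z < 0) : hZ N z = 0 := if_neg (not_le.2 h)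

lemma eZ_coe (k : ℕ) : eZ N (k : ℤ) = esymm (Fin N) ℤ k := by
  rw [eZ, if_pos (Int.ofNat_nonneg k), Int.toNat_natCast]

lemma eZ_neg {z : ℤ} (h : z < 0) : eZ N z = 0 := if_neg (not_le.2 h)

lemma JT_negpow {R : Type*} [Monoid R] [HasDistribNeg R] {p q : ℕ} (h : p % 2 = q % 2) :
    (-1 : R)^p = (-1)^q := by
  rcases Nat.even_or_odd p with hp | hp
  · have hq : Even q := by rw [Nat.even_iff] at *; omega
    rw [hp.neg_one_pow, hq.neg_one_pow]
  · have hq : Odd q := by rw [Nat.odd_iff] at *; omega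
    rw [hp.neg_one_pow, hq.neg_one_pow]

noncomputable def JTA (n : ℕ) : Matrix (Fin n) (Fin n) (MvPolynomial (Fin N) ℤ) :=
  Matrix.of fun i j => hZ N ((j.val : ℤ) - (i.val : ℤ))

noncomputable def JTB (n : ℕ) : Matrix (Fin n) (Fin n) (MvPolynomial (Fin N) ℤ) :=
  Matrix.of fun i j => (-1)^(i.val + j.val) * eZ N ((j.val : ℤ) - (i.val : ℤ))

lemma JTA_det (n : ℕ) : (JTA N n).det = 1 := by
  rw [Matrix.det_of_upperTriangular (M := JTA N n) ?tri]
  case tri =>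
    intro i j hji
    exact hZ_neg N (by simp only [id] at hji; omega)
  apply Finset.prod_eq_one
  intro i _
  show hZ N ((i.val : ℤ) - (i.val : ℤ)) = 1
  rw [sub_self, show (0:ℤ) = ((0:ℕ):ℤ) from rfl, hZ_coe, hsymm_zero]

lemma JTAB (n : ℕ) : JTA N n * JTB N n = 1 := by
  refine Matrix.ext fun i k => ?_
  rw [Matrix.mul_apply, Matrix.one_apply]
  set g : ℕ → MvPolynomial (Fin N) ℤ := fun j =>
    hZ N ((j:ℤ) - (i.val:ℤ)) * ((-1)^(j + k.val) * eZ N ((k.val:ℤ) - (j:ℤ))) with hg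
  have hsum : ∑ j, JTA N n i j * JTB N n j k = ∑ j ∈ range n, g j := by
    rw [← Fin.sum_univ_eq_sum_range]
    rfl
  rw [hsum]
  by_cases hik : i.val ≤ k.val
  · set d := k.val - i.val with hd
    have h1 : ∑ j ∈ range n, g j = ∑ j ∈ range (k.val+1), g j := by
      refine (Finset.sum_subset (by intro x hx; simp only [mem_range] at *; omega) ?_).symm
      intro j _ hj
      simp only [mem_range] at hj
      rw [hg]
      simp only []
      rw [eZ_neg N (by omega), mul_zero, mul_zero]
    have h2 : ∑ j ∈ range (k.val+1), g j = ∑ t ∈ range (k.val+1), g (k.val - t) := by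
      rw [← Finset.sum_range_reflect]
      simp only [Nat.add_sub_cancel]
    have h3 : ∑ t ∈ range (k.val+1), g (k.val - t) = ∑ t ∈ range (d+1), g (k.val - t) := by
      refine (Finset.sum_subset (by intro x hx; simp only [mem_range] at *; omega) ?_).symm
      intro t ht ht'
      simp only [mem_range] at ht ht'
      rw [hg]
      simp only []
      rw [hZ_neg N (by omega), zero_mul]
    have h4 : ∀ t ∈ range (d+1), g (k.val - t)
        = (-1)^t * (esymm (Fin N) ℤ t * hsymm (Fin N) ℤ (d - t)) := by
      intro t ht
      simp only [mem_range] at ht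
      have e1 : ((k.val - t : ℕ) : ℤ) - (i.val : ℤ) = ((d - t : ℕ) : ℤ) := by omega
      have e2 : (k.val:ℤ) - ((k.val - t : ℕ):ℤ) = ((t:ℕ):ℤ) := by omega
      rw [hg]
      simp only []
      rw [e1, e2, hZ_coe, eZ_coe, JT_negpow (p := (k.val - t) + k.val) (q := t) (by omega)]
      ring
    rw [h1, h2, h3, Finset.sum_congr rfl h4]
    by_cases hd0 : d = 0
    · have : i = k := Fin.ext (by omega)
      rw [if_pos this, hd0]
      rw [Finset.sum_range_one, esymm_zero, hsymm_zero]
      ring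
    · rw [if_neg (by intro h; apply hd0; have := congrArg Fin.val h; omega)]
      exact JT_eh d hd0
  · rw [if_neg (by intro h; rw [h] at hik; omega)]
    apply Finset.sum_eq_zero
    intro j _
    rw [hg]
    simp only []
    by_cases hj : j < i.val
    · rw [hZ_neg N (by omega), zero_mul]
    · rw [eZ_neg N (by omega), mul_zero, mul_zero]
end Mat

section Block
variable {α β R : Type*} [Fintype α] [Fintype β] [DecidableEq α] [DecidableEq β] [CommRing R]

lemma JT_det_block (C D : Matrix (α ⊕ β) (α ⊕ β) R) (h : C * D = 1) :
    (C.toBlocks₁₁).det = C.det * (D.toBlocks₂₂).det := by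
  have hCD : Matrix.fromBlocks
      (C.toBlocks₁₁ * D.toBlocks₁₁ + C.toBlocks₁₂ * D.toBlocks₂₁)
      (C.toBlocks₁₁ * D.toBlocks₁₂ + C.toBlocks₁₂ * D.toBlocks₂₂)
      (C.toBlocks₂₁ * D.toBlocks₁₁ + C.toBlocks₂₂ * D.toBlocks₂₁)
      (C.toBlocks₂₁ * D.toBlocks₁₂ + C.toBlocks₂₂ * D.toBlocks₂₂)
      = Matrix.fromBlocks 1 0 0 1 := by
    rw [← Matrix.fromBlocks_multiply, Matrix.fromBlocks_toBlocks, Matrix.fromBlocks_toBlocks,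
      Matrix.fromBlocks_one, h]
  have h12 : C.toBlocks₁₁ * D.toBlocks₁₂ + C.toBlocks₁₂ * D.toBlocks₂₂ = 0 := by
    have := congrArg Matrix.toBlocks₁₂ hCD
    simp only [Matrix.toBlocks_fromBlocks₁₂] at this
    exact this
  have h22 : C.toBlocks₂₁ * D.toBlocks₁₂ + C.toBlocks₂₂ * D.toBlocks₂₂ = 1 := by
    have := congrArg Matrix.toBlocks₂₂ hCD
    simp only [Matrix.toBlocks_fromBlocks₂₂] at this
    exact this
  have key : C * Matrix.fromBlocks 1 (D.toBlocks₁₂) 0 (D.toBlocks₂₂)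
      = Matrix.fromBlocks (C.toBlocks₁₁) 0 (C.toBlocks₂₁) 1 := by
    conv_lhs => rw [← Matrix.fromBlocks_toBlocks C]
    rw [Matrix.fromBlocks_multiply]
    rw [Matrix.mul_one, Matrix.mul_zero, Matrix.mul_one, Matrix.mul_zero, add_zero, add_zero,
      h12, h22]
  have hdet := congrArg Matrix.det key
  rw [Matrix.det_mul, Matrix.det_fromBlocks_zero₂₁, Matrix.det_fromBlocks_zero₁₂,
    Matrix.det_one, one_mul] at hdet
  rw [Matrix.det_one, mul_one] at hdet
  exact hdet.symm

end Block

section Tau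

def JTconj (ℓ : ℕ) (lam : ℕ → ℕ) (a : ℕ) : ℕ :=
  ((Finset.Icc 1 ℓ).filter fun j => a ≤ lam j).card

lemma JTconj_le (ℓ : ℕ) (lam : ℕ → ℕ) (a : ℕ) : JTconj ℓ lam a ≤ ℓ := by
  refine le_trans (Finset.card_filter_le _ _) ?_
  rw [Nat.card_Icc]; omega

lemma JTconj_anti (ℓ : ℕ) (lam : ℕ → ℕ) {a b : ℕ} (hab : a ≤ b) :
    JTconj ℓ lam b ≤ JTconj ℓ lam a :=
  Finset.card_le_card (Finset.monotone_filter_right _ fun j _ hj => le_trans hab hj)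

def JTtau (ℓ m : ℕ) (lam : ℕ → ℕ) : Fin ℓ ⊕ Fin m → Fin (ℓ + m)
  | Sum.inl i => ⟨m + i.val - lam (i.val+1), by
      have h1 := i.isLt
      have h2 := Nat.sub_le (m + i.val) (lam (i.val+1))
      omega⟩
  | Sum.inr a => ⟨m - (a.val+1) + JTconj ℓ lam (a.val+1), by
      have h1 := a.isLt
      have h2 := JTconj_le ℓ lam (a.val+1)
      omega⟩

lemma JTconj_ge (ℓ : ℕ) (lam : ℕ → ℕ)
    (hanti : ∀ i j, 1 ≤ i → i ≤ j → lam j ≤ lam i) {a i : ℕ}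
    (hiℓ : i + 1 ≤ ℓ) (ha : a ≤ lam (i+1)) : i + 1 ≤ JTconj ℓ lam a := by
  have hsub : Finset.Icc 1 (i+1) ⊆ (Finset.Icc 1 ℓ).filter fun j => a ≤ lam j := by
    intro j hj
    rw [Finset.mem_Icc] at hj
    rw [Finset.mem_filter, Finset.mem_Icc]
    exact ⟨⟨hj.1, le_trans hj.2 hiℓ⟩, le_trans ha (hanti j (i+1) hj.1 hj.2)⟩
  have := Finset.card_le_card hsub
  rwa [Nat.card_Icc, Nat.add_sub_cancel] at this

lemma JTconj_lt (ℓ : ℕ) (lam : ℕ → ℕ)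
    (hanti : ∀ i j, 1 ≤ i → i ≤ j → lam j ≤ lam i) {a i : ℕ}
    (ha : lam (i+1) ≤ a) : JTconj ℓ lam (a+1) ≤ i := by
  have hsub : ((Finset.Icc 1 ℓ).filter fun j => a + 1 ≤ lam j) ⊆ Finset.Icc 1 i := by
    intro j hj
    rw [Finset.mem_filter, Finset.mem_Icc] at hj
    rw [Finset.mem_Icc]
    refine ⟨hj.1.1, ?_⟩
    by_contra hji
    have : lam j ≤ lam (i+1) := hanti (i+1) j (by omega) (by omega)
    omega
  have := Finset.card_le_card hsub
  rwa [Nat.card_Icc, Nat.add_sub_cancel] at this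

lemma JTtau_bij (ℓ m : ℕ) (lam : ℕ → ℕ)
    (hanti : ∀ i j, 1 ≤ i → i ≤ j → lam j ≤ lam i) (hm : lam 1 ≤ m) :
    Function.Bijective (JTtau ℓ m lam) := by
  rw [Fintype.bijective_iff_injective_and_card]
  refine ⟨?_, by simp⟩
  have hle : ∀ i : ℕ, lam (i+1) ≤ m := fun i => le_trans (hanti 1 (i+1) le_rfl (by omega)) hm
  have key : ∀ (i : Fin ℓ) (a : Fin m),
      (JTtau ℓ m lam (Sum.inl i)).val ≠ (JTtau ℓ m lam (Sum.inr a)).val := by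
    intro i a h
    simp only [JTtau] at h
    by_cases hc : a.val + 1 ≤ lam (i.val+1)
    · have h1 := JTconj_ge ℓ lam hanti (a := a.val+1) (i := i.val) i.isLt hc
      have h2 := hle i.val
      have h3 := a.isLt
      omega
    · have h2 := JTconj_lt ℓ lam hanti (a := a.val) (i := i.val) (by omega)
      have h3 := a.isLt
      have h4 := hle i.val
      omega
  intro z w h
  match z, w with
  | Sum.inl i, Sum.inl i' =>
    have hv : (m + i.val - lam (i.val+1)) = (m + i'.val - lam (i'.val+1)) := by
      simpa [JTtau, Fin.mk.injEq] using h
    have h1 := hle i.val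
    have h2 := hle i'.val
    rcases le_total i.val i'.val with hii | hii
    · have := hanti (i.val+1) (i'.val+1) (by omega) (by omega)
      have : i.val = i'.val := by omega
      exact congrArg Sum.inl (Fin.ext this)
    · have := hanti (i'.val+1) (i.val+1) (by omega) (by omega)
      have : i.val = i'.val := by omega
      exact congrArg Sum.inl (Fin.ext this)
  | Sum.inl i, Sum.inr a => exact absurd (congrArg Fin.val h) (key i a)
  | Sum.inr a, Sum.inl i => exact absurd (congrArg Fin.val h.symm) (key i a)
  | Sum.inr a, Sum.inr a' =>
    have hv : (m - (a.val+1) + JTconj ℓ lam (a.val+1))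
        = (m - (a'.val+1) + JTconj ℓ lam (a'.val+1)) := by
      simpa [JTtau, Fin.mk.injEq] using h
    have h3 := a.isLt
    have h4 := a'.isLt
    rcases le_total a.val a'.val with haa | haa
    · have := JTconj_anti ℓ lam (by omega : a.val + 1 ≤ a'.val + 1)
      have : a.val = a'.val := by omega
      exact congrArg Sum.inr (Fin.ext this)
    · have := JTconj_anti ℓ lam (by omega : a'.val + 1 ≤ a.val + 1)
      have : a.val = a'.val := by omega
      exact congrArg Sum.inr (Fin.ext this)

end Tau

section Sign

lemma JT_swap_symm {A B : Type*} [DecidableEq A] [DecidableEq B] (e : A ≃ B) (x y : B) (v : B) :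
    e.symm (Equiv.swap x y v) = Equiv.swap (e.symm x) (e.symm y) (e.symm v) := by
  by_cases hvx : v = x
  · subst hvx; rw [Equiv.swap_apply_left, Equiv.swap_apply_left]
  by_cases hvy : v = y
  · subst hvy; rw [Equiv.swap_apply_right, Equiv.swap_apply_right]
  rw [Equiv.swap_apply_of_ne_of_ne hvx hvy,
    Equiv.swap_apply_of_ne_of_ne (e.symm.injective.ne hvx) (e.symm.injective.ne hvy)]

set_option maxHeartbeats 2000000 in
lemma JTsign (ℓ m : ℕ) : ∀ (S : ℕ) (lam : ℕ → ℕ)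
    (hanti : ∀ i j, 1 ≤ i → i ≤ j → lam j ≤ lam i) (hm : lam 1 ≤ m)
    (_hz : ∀ i, ℓ < i → lam i = 0) (_hsum : ∑ j ∈ Finset.Icc 1 ℓ, lam j = S),
    Equiv.Perm.sign ((Equiv.ofBijective _ (JTtau_bij ℓ m lam hanti hm)).trans
      (Equiv.ofBijective _ (JTtau_bij ℓ m (fun _ => 0)
        (fun _ _ _ _ => le_rfl) (Nat.zero_le m))).symm) = (-1)^S := by
  intro S
  induction S with
  | zero =>
    intro lam hanti hm hz hsum
    have hall : ∀ j, 1 ≤ j → lam j = 0 := by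
      intro j hj
      by_cases hjl : j ≤ ℓ
      · exact Finset.sum_eq_zero_iff.1 hsum j (Finset.mem_Icc.2 ⟨hj, hjl⟩)
      · exact hz j (by omega)
    have htau : ∀ z, JTtau ℓ m lam z = JTtau ℓ m (fun _ => 0) z := by
      intro z
      match z with
      | Sum.inl i =>
        apply Fin.ext
        simp [JTtau, hall (i.val+1) (by omega)]
      | Sum.inr a =>
        have hcj : JTconj ℓ lam (a.val+1) = JTconj ℓ (fun _ => 0) (a.val+1) := by
          unfold JTconj
          congr 1
          apply Finset.filter_congr
          intro j hj
          rw [Finset.mem_Icc] at hj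
          simp [hall j hj.1]
        apply Fin.ext
        simp [JTtau, hcj]
    have hrefl : (Equiv.ofBijective _ (JTtau_bij ℓ m lam hanti hm)).trans
        (Equiv.ofBijective _ (JTtau_bij ℓ m (fun _ => 0)
          (fun _ _ _ _ => le_rfl) (Nat.zero_le m))).symm = Equiv.refl _ := by
      apply Equiv.ext
      intro z
      rw [Equiv.trans_apply, Equiv.ofBijective_apply, htau z, Equiv.refl_apply,
        Equiv.symm_apply_eq, Equiv.ofBijective_apply]
    rw [hrefl]
    simp
  | succ S ih =>
    intro lam hanti hm hz hsum
    have hc1 : 1 ≤ lam 1 := by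
      by_contra h0
      have h1 : lam 1 = 0 := by omega
      have : ∑ j ∈ Finset.Icc 1 ℓ, lam j = 0 := by
        apply Finset.sum_eq_zero
        intro j hj
        rw [Finset.mem_Icc] at hj
        have := hanti 1 j le_rfl hj.1
        omega
      omega
    have hℓ1 : 1 ≤ ℓ := by
      by_contra h0
      have : Finset.Icc 1 ℓ = ∅ := by
        apply Finset.Icc_eq_empty; omega
      rw [this, Finset.sum_empty] at hsum
      omega
    set c := lam 1 with hcdef
    set i := JTconj ℓ lam c with hidef
    have hi1 : 1 ≤ i := JTconj_ge ℓ lam hanti (by omega) (le_rfl : c ≤ lam (0+1))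
    have hiℓ : i ≤ ℓ := JTconj_le ℓ lam c
    have hlami : lam i = c := by
      have hup : lam i ≤ c := hanti 1 i le_rfl hi1
      by_contra hne
      have hlt : lam i ≤ c - 1 := by omega
      have := JTconj_lt ℓ lam hanti (a := c - 1) (i := i - 1)
        (by rw [show i - 1 + 1 = i by omega]; exact hlt)
      rw [show c - 1 + 1 = c by omega] at this
      omega
    have hlami1 : lam (i+1) ≤ c - 1 := by
      by_cases hiℓ' : i + 1 ≤ ℓ
      · by_contra hge
        have := JTconj_ge ℓ lam hanti (a := c) (i := i) hiℓ' (by omega)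
        omega
      · rw [hz (i+1) (by omega)]; omega
    set μ := Function.update lam i (c-1) with hμdef
    have hμapp : ∀ j, j ≠ i → μ j = lam j := fun j hj => Function.update_of_ne hj _ _
    have hμi : μ i = c - 1 := Function.update_self _ _ _
    have hμanti : ∀ a b, 1 ≤ a → a ≤ b → μ b ≤ μ a := by
      intro a b ha hab
      by_cases hbi : b = i
      · by_cases hai : a = i
        · rw [hbi, hai]
        · rw [hbi, hμi, hμapp a hai]
          have h1 := hanti a i ha (by omega)
          omega
      · by_cases hai : a = i
        · rw [hai] at hab
          rw [hai, hμi, hμapp b hbi]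
          have h1 := hanti (i+1) b (by omega) (by omega)
          omega
        · rw [hμapp a hai, hμapp b hbi]
          exact hanti a b ha hab
    have hμm : μ 1 ≤ m := by
      by_cases h1i : (1:ℕ) = i
      · rw [← h1i] at hμi; omega
      · rw [hμapp 1 h1i]; exact hm
    have hμz : ∀ j, ℓ < j → μ j = 0 := by
      intro j hj
      rw [hμapp j (by omega)]
      exact hz j hj
    have hμsum : ∑ j ∈ Finset.Icc 1 ℓ, μ j = S := by
      have hmem : i ∈ Finset.Icc 1 ℓ := Finset.mem_Icc.2 ⟨hi1, hiℓ⟩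
      rw [hμdef, Finset.sum_update_of_mem hmem]
      have := Finset.add_sum_erase _ lam hmem
      rw [Finset.sdiff_singleton_eq_erase]
      omega
    have hμconj_ne : ∀ a, a ≠ c → JTconj ℓ μ a = JTconj ℓ lam a := by
      intro a hac
      unfold JTconj
      congr 1
      apply Finset.filter_congr
      intro j _
      by_cases hji : j = i
      · rw [hji, hμi, hlami]
        constructor <;> (intro; omega)
      · rw [hμapp j hji]
    have hμconj_c : JTconj ℓ μ c = i - 1 := by
      have hset : ((Finset.Icc 1 ℓ).filter fun j => c ≤ μ j)
          = ((Finset.Icc 1 ℓ).filter fun j => c ≤ lam j).erase i := by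
        ext j
        rw [Finset.mem_erase, Finset.mem_filter, Finset.mem_filter]
        constructor
        · rintro ⟨hj, hc⟩
          have hji : j ≠ i := by
            intro h; rw [h, hμi] at hc; omega
          rw [hμapp j hji] at hc
          exact ⟨hji, hj, hc⟩
        · rintro ⟨hji, hj, hc⟩
          refine ⟨hj, ?_⟩
          rw [hμapp j hji]
          exact hc
      have hmemf : i ∈ ((Finset.Icc 1 ℓ).filter fun j => c ≤ lam j) := by
        rw [Finset.mem_filter, Finset.mem_Icc]
        exact ⟨⟨hi1, hiℓ⟩, by omega⟩
      unfold JTconj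
      rw [hset, Finset.card_erase_of_mem hmemf]
      rfl
    have hcm : c ≤ m := hm
    set x : Fin (ℓ+m) := JTtau ℓ m lam (Sum.inl ⟨i-1, by omega⟩) with hxdef
    set y : Fin (ℓ+m) := JTtau ℓ m lam (Sum.inr ⟨c-1, by omega⟩) with hydef
    have hxv : x.val = m + i - 1 - c := by
      rw [hxdef]
      show m + (i-1) - lam ((i-1)+1) = m + i - 1 - c
      rw [show i - 1 + 1 = i by omega, hlami]
      omega
    have hyv : y.val = m - c + i := by
      rw [hydef]
      show m - ((c-1)+1) + JTconj ℓ lam ((c-1)+1) = m - c + i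
      rw [show c - 1 + 1 = c by omega, ← hidef]
    have hxy : x ≠ y := by
      intro h
      have := congrArg Fin.val h
      rw [hxv, hyv] at this
      omega
    have hinj := (JTtau_bij ℓ m lam hanti hm).1
    have htau : ∀ z, JTtau ℓ m μ z = Equiv.swap x y (JTtau ℓ m lam z) := by
      intro z
      match z with
      | Sum.inl j =>
        by_cases hj : j.val = i - 1
        · have hjeq : (Sum.inl j : Fin ℓ ⊕ Fin m) = Sum.inl ⟨i-1, by omega⟩ := by
            congr 1; exact Fin.ext hj
          rw [hjeq, ← hxdef, Equiv.swap_apply_left]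
          apply Fin.ext
          show m + (i-1) - μ ((i-1)+1) = y.val
          rw [show i - 1 + 1 = i by omega, hμi, hyv]
          omega
        · have hv : JTtau ℓ m μ (Sum.inl j) = JTtau ℓ m lam (Sum.inl j) := by
            apply Fin.ext
            show m + j.val - μ (j.val+1) = m + j.val - lam (j.val+1)
            rw [hμapp _ (by omega)]
          have hnx : JTtau ℓ m lam (Sum.inl j) ≠ x := by
            rw [hxdef]
            intro h
            have h2 := hinj h
            rw [Sum.inl.injEq] at h2
            exact hj (congrArg Fin.val h2)
          have hny : JTtau ℓ m lam (Sum.inl j) ≠ y := by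
            rw [hydef]
            intro h
            have h2 := hinj h
            simp at h2
          rw [hv, Equiv.swap_apply_of_ne_of_ne hnx hny]
      | Sum.inr b =>
        by_cases hb : b.val = c - 1
        · have hbeq : (Sum.inr b : Fin ℓ ⊕ Fin m) = Sum.inr ⟨c-1, by omega⟩ := by
            congr 1; exact Fin.ext hb
          rw [hbeq, ← hydef, Equiv.swap_apply_right]
          apply Fin.ext
          show m - ((c-1)+1) + JTconj ℓ μ ((c-1)+1) = x.val
          rw [show c - 1 + 1 = c by omega, hμconj_c, hxv]
          omega
        · have hv : JTtau ℓ m μ (Sum.inr b) = JTtau ℓ m lam (Sum.inr b) := by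
            apply Fin.ext
            show m - (b.val+1) + JTconj ℓ μ (b.val+1) = m - (b.val+1) + JTconj ℓ lam (b.val+1)
            rw [hμconj_ne _ (by omega)]
          have hnx : JTtau ℓ m lam (Sum.inr b) ≠ x := by
            rw [hxdef]
            intro h
            have h2 := hinj h
            simp at h2
          have hny : JTtau ℓ m lam (Sum.inr b) ≠ y := by
            rw [hydef]
            intro h
            have h2 := hinj h
            rw [Sum.inr.injEq] at h2
            exact hb (congrArg Fin.val h2)
          rw [hv, Equiv.swap_apply_of_ne_of_ne hnx hny]
    set σ0 := Equiv.ofBijective _ (JTtau_bij ℓ m (fun _ => 0)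
        (fun _ _ _ _ => le_rfl) (Nat.zero_le m)) with hσ0
    have hperm : (Equiv.ofBijective _ (JTtau_bij ℓ m μ hμanti hμm)).trans σ0.symm
        = Equiv.swap (σ0.symm x) (σ0.symm y)
          * ((Equiv.ofBijective _ (JTtau_bij ℓ m lam hanti hm)).trans σ0.symm) := by
      apply Equiv.ext
      intro z
      rw [Equiv.Perm.mul_apply, Equiv.trans_apply, Equiv.trans_apply,
        Equiv.ofBijective_apply, Equiv.ofBijective_apply, htau z, JT_swap_symm]
    have h1 := congrArg Equiv.Perm.sign hperm
    rw [map_mul, Equiv.Perm.sign_swap (σ0.symm.injective.ne hxy),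
      ih μ hμanti hμm hμz hμsum] at h1
    rw [pow_succ, h1, neg_one_mul, mul_neg_one, neg_neg]
    
end Sign

lemma JTconj_sum (ℓ m : ℕ) (lam : ℕ → ℕ) (h : ∀ j ∈ Finset.Icc 1 ℓ, lam j ≤ m) :
    ∑ b ∈ Finset.range m, JTconj ℓ lam (b+1) = ∑ j ∈ Finset.Icc 1 ℓ, lam j := by
  unfold JTconj
  simp_rw [Finset.card_filter]
  rw [Finset.sum_comm]
  apply Finset.sum_congr rfl
  intro j hj
  have hfil : (Finset.range m).filter (fun b => j ∈ Finset.Icc 1 ℓ ∧ b + 1 ≤ lam j)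
      = Finset.range (lam j) := by
    ext b
    rw [Finset.mem_filter, Finset.mem_range, Finset.mem_range]
    constructor
    · rintro ⟨_, _, hb⟩; omega
    · intro hb
      exact ⟨by have := h j hj; omega, hj, by omega⟩
  calc ∑ b ∈ Finset.range m, (if b + 1 ≤ lam j then 1 else 0)
      = ∑ b ∈ Finset.range m, (if j ∈ Finset.Icc 1 ℓ ∧ b + 1 ≤ lam j then 1 else 0) := by
        apply Finset.sum_congr rfl
        intro b _
        by_cases hc : b + 1 ≤ lam j <;> simp [hc, hj]
    _ = lam j := by rw [← Finset.card_filter, hfil, Finset.card_range]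

set_option maxHeartbeats 2000000 in
/-- The two Jacobi–Trudi determinants agree: for a partition `λ` (given by a 1-based
part function `lam` with exactly `ℓ` nonzero parts) with conjugate partition
`λ'_i = #{j : λ_j ≥ i}` (which has `λ_1` parts),
`det (h_{λ_i + j - i})_{1 ≤ i,j ≤ ℓ(λ)} = det (e_{λ'_i + j - i})_{1 ≤ i,j ≤ ℓ(λ')}`
in `ℤ[x_1, ..., x_N]`. -/
theorem jacobiTrudi_eq_dual_jacobiTrudi (N ℓ : ℕ) (lam : ℕ → ℕ)
    (hanti : ∀ i j, 1 ≤ i → i ≤ j → lam j ≤ lam i)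
    (hpos : ∀ i, 1 ≤ i → i ≤ ℓ → 0 < lam i)
    (hzero : ∀ i, ℓ < i → lam i = 0) :
    Matrix.det (Matrix.of fun i j : Fin ℓ =>
        hZ N ((lam (i.val + 1) : ℤ) + (j.val : ℤ) - (i.val : ℤ))) =
      Matrix.det (Matrix.of fun i j : Fin (lam 1) =>
        eZ N ((((Finset.Icc 1 ℓ).filter fun a => i.val + 1 ≤ lam a).card : ℤ)
          + (j.val : ℤ) - (i.val : ℤ))) := by
  classical
  set m := lam 1 with hmdef
  set n := ℓ + m with hndef
  have hm : lam 1 ≤ m := le_rfl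
  have hle : ∀ t : ℕ, lam (t+1) ≤ m := fun t => le_trans (hanti 1 (t+1) le_rfl (by omega)) hm
  set σL := Equiv.ofBijective _ (JTtau_bij ℓ m lam hanti hm) with hσL
  set σ0 := Equiv.ofBijective _ (JTtau_bij ℓ m (fun _ => 0)
      (fun _ _ _ _ => le_rfl) (Nat.zero_le m)) with hσ0
  set C := (JTA N n).submatrix σL σ0 with hC
  set D := (JTB N n).submatrix σ0 σL with hD
  have hCD : C * D = 1 := by
    rw [hC, hD, Matrix.submatrix_mul_equiv, JTAB, Matrix.submatrix_one_equiv]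
  have hblock := JT_det_block C D hCD
  have hconj0 : ∀ a : ℕ, JTconj ℓ (fun _ => 0) (a+1) = 0 := by
    intro a
    unfold JTconj
    rw [Finset.card_eq_zero, Finset.filter_eq_empty_iff]
    intro j _
    show ¬ (a + 1 ≤ 0)
    omega
  -- identify the h-block
  have hC11 : C.toBlocks₁₁ = Matrix.of (fun i j : Fin ℓ =>
      hZ N ((lam (i.val + 1) : ℤ) + (j.val : ℤ) - (i.val : ℤ))) := by
    refine Matrix.ext fun i j => ?_
    show hZ N (((JTtau ℓ m (fun _ => 0) (Sum.inl j)).val : ℤ)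
        - ((JTtau ℓ m lam (Sum.inl i)).val : ℤ)) = _
    have hv1 : (JTtau ℓ m (fun _ => 0) (Sum.inl j)).val = m + j.val := by
      show m + j.val - 0 = m + j.val
      omega
    have hv2 : (JTtau ℓ m lam (Sum.inl i)).val = m + i.val - lam (i.val + 1) := rfl
    rw [hv1, hv2, Matrix.of_apply]
    congr 1
    have := hle i.val
    omega
  -- determinant of C
  set S := ∑ j ∈ Finset.Icc 1 ℓ, lam j with hSdef
  set g : Equiv.Perm (Fin ℓ ⊕ Fin m) := σL.trans σ0.symm with hg
  have hCeq : C = ((JTA N n).submatrix σ0 σ0).submatrix g id := by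
    refine Matrix.ext fun z w => ?_
    show JTA N n (σL z) (σ0 w) = JTA N n (σ0 (g z)) (σ0 w)
    congr 1
    rw [hg]
    exact (Equiv.apply_symm_apply σ0 (σL z)).symm
  have hdetC : C.det = (((Equiv.Perm.sign g : ℤˣ) : ℤ) : MvPolynomial (Fin N) ℤ) := by
    rw [hCeq, Matrix.det_permute, Matrix.det_submatrix_equiv_self, JTA_det, mul_one]
  have hsg : Equiv.Perm.sign g = (-1)^S := JTsign ℓ m S lam hanti hm hzero hSdef.symm
  -- identify the e-block
  set Emat := Matrix.of (fun i j : Fin m =>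
      eZ N ((((Finset.Icc 1 ℓ).filter fun a => i.val + 1 ≤ lam a).card : ℤ)
        + (j.val : ℤ) - (i.val : ℤ))) with hEmat
  set r : Fin m → MvPolynomial (Fin N) ℤ :=
      fun b => (-1)^(b.val + JTconj ℓ lam (b.val+1)) with hr
  set s : Fin m → MvPolynomial (Fin N) ℤ := fun a => (-1)^(a.val) with hs
  have hD22 : D.toBlocks₂₂ = (Matrix.diagonal r * (Emat * Matrix.diagonal s)).transpose := by
    refine Matrix.ext fun a b => ?_
    rw [Matrix.transpose_apply, Matrix.diagonal_mul, Matrix.mul_diagonal]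
    show (-1)^((JTtau ℓ m (fun _ => 0) (Sum.inr a)).val + (JTtau ℓ m lam (Sum.inr b)).val)
        * eZ N (((JTtau ℓ m lam (Sum.inr b)).val : ℤ)
          - ((JTtau ℓ m (fun _ => 0) (Sum.inr a)).val : ℤ)) = _
    have hv1 : (JTtau ℓ m (fun _ => 0) (Sum.inr a)).val = m - (a.val + 1) := by
      show m - (a.val+1) + JTconj ℓ (fun _ => 0) (a.val+1) = m - (a.val+1)
      rw [hconj0]
      omega
    have hv2 : (JTtau ℓ m lam (Sum.inr b)).val
        = m - (b.val + 1) + JTconj ℓ lam (b.val+1) := rfl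
    have ham := a.isLt
    have hbm := b.isLt
    have hcle := JTconj_le ℓ lam (b.val+1)
    rw [hv1, hv2]
    have harg : ((m - (b.val + 1) + JTconj ℓ lam (b.val+1) : ℕ) : ℤ)
        - ((m - (a.val + 1) : ℕ) : ℤ)
        = ((JTconj ℓ lam (b.val+1) : ℤ) + (a.val : ℤ) - (b.val : ℤ)) := by
      omega
    have hsgn : ((-1 : MvPolynomial (Fin N) ℤ))^((m - (a.val + 1))
        + (m - (b.val + 1) + JTconj ℓ lam (b.val+1)))
        = (-1)^(a.val + (b.val + JTconj ℓ lam (b.val+1))) := by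
      apply JT_negpow
      omega
    rw [harg, hsgn, hr, hs]
    show (-1)^(a.val + (b.val + JTconj ℓ lam (b.val+1)))
        * eZ N ((JTconj ℓ lam (b.val+1) : ℤ) + (a.val : ℤ) - (b.val : ℤ))
      = (-1)^(b.val + JTconj ℓ lam (b.val+1))
        * (eZ N ((JTconj ℓ lam (b.val+1) : ℤ) + (a.val : ℤ) - (b.val : ℤ)) * (-1)^(a.val))
    rw [pow_add, pow_add]
    ring
  have hTd : (D.toBlocks₂₂).det
      = (-1)^(∑ b ∈ Finset.range m, (b + JTconj ℓ lam (b+1)))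
        * ((-1)^(∑ b ∈ Finset.range m, b) * Emat.det) := by
    rw [hD22, Matrix.det_transpose, Matrix.det_mul, Matrix.det_mul, Matrix.det_diagonal,
      Matrix.det_diagonal, hr, hs]
    rw [Finset.prod_pow_eq_pow_sum, Finset.prod_pow_eq_pow_sum,
      Fin.sum_univ_eq_sum_range (fun t => t + JTconj ℓ lam (t+1)) m,
      Fin.sum_univ_eq_sum_range (fun t => t) m]
    ring
  have hsum_conj : ∑ b ∈ Finset.range m, JTconj ℓ lam (b+1) = S := by
    rw [hSdef]
    apply JTconj_sum
    intro j hj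
    rw [Finset.mem_Icc] at hj
    have := hle (j-1)
    rw [show j - 1 + 1 = j by omega] at this
    exact this
  have hsplit : ∑ b ∈ Finset.range m, (b + JTconj ℓ lam (b+1))
      = (∑ b ∈ Finset.range m, b) + ∑ b ∈ Finset.range m, JTconj ℓ lam (b+1) :=
    Finset.sum_add_distrib
  have hkey : ∀ (E : MvPolynomial (Fin N) ℤ) (p q u : ℕ), (p + q + u) % 2 = 0 →
      (-1 : MvPolynomial (Fin N) ℤ)^p * ((-1)^q * ((-1)^u * E)) = E := by
    intro E p q u h
    have heven : Even (p + q + u) := Nat.even_iff.2 h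
    calc (-1 : MvPolynomial (Fin N) ℤ)^p * ((-1)^q * ((-1)^u * E))
        = ((-1)^(p+q+u)) * E := by rw [pow_add, pow_add]; ring
      _ = E := by rw [heven.neg_one_pow, one_mul]
  rw [← hC11, hblock, hdetC, hsg, hTd]
  have hcast : (((((-1)^S : ℤˣ) : ℤ)) : MvPolynomial (Fin N) ℤ)
      = (-1 : MvPolynomial (Fin N) ℤ)^S := by
    push_cast
    norm_num
  rw [hcast]
  apply hkey
  omega
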